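/- Let V₁ = [[a₁, B₁],[C₁, D₁]] and V₂ = [[a₂, B₂],[C₂, D₂]] be colligations with transfer functions τ_{V₁}(z₁) = a₁ + z₁B₁(I - z₁D₁)^{-1}C₁ and τ_{V₂}(z₂) = a₂ + z₂B₂(I - z₂D₂)^{-1}C₂, where D₁, D₂ are contractions. Then the colligation V = [[a₁a₂, B₁, a₁B₂],[a₂C₁, D₁, C₁B₂],[C₂, 0, D₂]] has two-variable transfer function τ_V(z₁,z₂) = τ_{V₁}(z₁)·τ_{V₂}(z₂) for all (z₁,z₂) ∈ 𝔻². -/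
import Mathlib


open ContinuousLinearMap Metric

section

variable {H₁ H₂ : Type*}
  [NormedAddCommGroup H₁] [InnerProductSpace ℂ H₁] [CompleteSpace H₁]
  [NormedAddCommGroup H₂] [InnerProductSpace ℂ H₂] [CompleteSpace H₂]

/-- One-variable transfer function `τ_V(z) = a + z B (I - z D)^{-1} C` of the colligation
`[[a, B],[C, D]]` on `ℂ ⊕ H`. -/
noncomputable def transfer1 {H : Type*} [NormedAddCommGroup H] [InnerProductSpace ℂ H]
    [CompleteSpace H] (a : ℂ) (B : H →L[ℂ] ℂ) (C : H) (D : H →L[ℂ] H) (z : ℂ) : ℂ :=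
  a + z * B ((Ring.inverse (1 - z • D) : H →L[ℂ] H) C)

/-- `E(z) = z₁ I_{H₁} ⊕ z₂ I_{H₂}`. -/
noncomputable def Eop (z₁ z₂ : ℂ) : (H₁ × H₂) →L[ℂ] H₁ × H₂ :=
  (z₁ • ContinuousLinearMap.fst ℂ H₁ H₂).prod (z₂ • ContinuousLinearMap.snd ℂ H₁ H₂)

/-- The block operator `[[D₁, D₂],[0, D₃]]` on `H₁ ⊕ H₂`. -/
noncomputable def Dop (D₁ : H₁ →L[ℂ] H₁) (D₂ : H₂ →L[ℂ] H₁) (D₃ : H₂ →L[ℂ] H₂) :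
    (H₁ × H₂) →L[ℂ] H₁ × H₂ :=
  (D₁.coprod D₂).prod ((0 : H₁ →L[ℂ] H₂).coprod D₃)

/-- Two-variable transfer function `τ_V(z) = a + B (I - E(z)D)^{-1} E(z) C`. -/
noncomputable def transfer2 (a : ℂ) (B₁ : H₁ →L[ℂ] ℂ) (B₂ : H₂ →L[ℂ] ℂ)
    (C₁ : H₁) (C₂ : H₂) (D₁ : H₁ →L[ℂ] H₁) (D₂ : H₂ →L[ℂ] H₁) (D₃ : H₂ →L[ℂ] H₂)
    (z₁ z₂ : ℂ) : ℂ :=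
  a + (B₁.coprod B₂)
    ((Ring.inverse (1 - (Eop z₁ z₂) * (Dop D₁ D₂ D₃)) :
        (H₁ × H₂) →L[ℂ] H₁ × H₂) ((Eop z₁ z₂) (C₁, C₂)))

lemma Dop_apply (D₁ : H₁ →L[ℂ] H₁) (D₂ : H₂ →L[ℂ] H₁) (D₃ : H₂ →L[ℂ] H₂) (x : H₁ × H₂) :
    Dop D₁ D₂ D₃ x = (D₁ x.1 + D₂ x.2, D₃ x.2) := by
  simp [Dop]

lemma Eop_apply (z₁ z₂ : ℂ) (x : H₁ × H₂) : (Eop z₁ z₂ : _ →L[ℂ] _) x = (z₁ • x.1, z₂ • x.2) := by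
  simp [Eop]

lemma Dop_mul (A B C : _) (A' : H₁ →L[ℂ] H₁) (B' : H₂ →L[ℂ] H₁) (C' : H₂ →L[ℂ] H₂) :
    Dop A B C * Dop A' B' C' = Dop (A ∘L A') (A ∘L B' + B ∘L C') (C ∘L C') := by
  ext x <;> simp [Dop_apply, mul_apply]

lemma Dop_one : (Dop 1 0 1 : (H₁ × H₂) →L[ℂ] _) = 1 := by
  ext x <;> simp [Dop_apply]

lemma one_sub_E_D (z₁ z₂ : ℂ) (D₁ : H₁ →L[ℂ] H₁) (D' : H₂ →L[ℂ] H₁) (D₂ : H₂ →L[ℂ] H₂) :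
    1 - Eop z₁ z₂ * Dop D₁ D' D₂ = Dop (1 - z₁ • D₁) (-(z₁ • D')) (1 - z₂ • D₂) := by
  ext x <;> simp [Dop_apply, Eop_apply, mul_apply, smul_add, sub_eq_add_neg, neg_add]

/-- If `V₁ = [[a₁, B₁],[C₁, D₁]]` and `V₂ = [[a₂, B₂],[C₂, D₂]]` are
colligations with contractive `D₁, D₂`, then the colligation
`V = [[a₁a₂, B₁, a₁B₂],[a₂C₁, D₁, C₁B₂],[C₂, 0, D₂]]` satisfies
`τ_V(z₁,z₂) = τ_{V₁}(z₁) · τ_{V₂}(z₂)` for all `(z₁,z₂) ∈ 𝔻²`. -/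
theorem stmt_16 (a₁ a₂ : ℂ) (B₁ : H₁ →L[ℂ] ℂ) (B₂ : H₂ →L[ℂ] ℂ) (C₁ : H₁) (C₂ : H₂)
    (D₁ : H₁ →L[ℂ] H₁) (D₂ : H₂ →L[ℂ] H₂)
    (hD₁ : ‖D₁‖ ≤ 1) (hD₂ : ‖D₂‖ ≤ 1) :
    ∀ z₁ ∈ ball (0 : ℂ) 1, ∀ z₂ ∈ ball (0 : ℂ) 1,
      transfer2 (a₁ * a₂) B₁ (a₁ • B₂) (a₂ • C₁) C₂ D₁ (B₂.smulRight C₁) D₂ z₁ z₂ =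
        transfer1 a₁ B₁ C₁ D₁ z₁ * transfer1 a₂ B₂ C₂ D₂ z₂ := by
  intro z₁ hz₁ z₂ hz₂
  rw [mem_ball_zero_iff] at hz₁ hz₂
  have h₁ : ‖z₁ • D₁‖ < 1 := by
    calc ‖z₁ • D₁‖ = ‖z₁‖ * ‖D₁‖ := norm_smul _ _
    _ ≤ ‖z₁‖ * 1 := by gcongr
    _ < 1 := by simpa using hz₁
  have h₂ : ‖z₂ • D₂‖ < 1 := by
    calc ‖z₂ • D₂‖ = ‖z₂‖ * ‖D₂‖ := norm_smul _ _
    _ ≤ ‖z₂‖ * 1 := by gcongr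
    _ < 1 := by simpa using hz₂
  set u₁ : (H₁ →L[ℂ] H₁)ˣ := Units.oneSub (z₁ • D₁) h₁ with hu₁
  set u₂ : (H₂ →L[ℂ] H₂)ˣ := Units.oneSub (z₂ • D₂) h₂ with hu₂
  set R₁ : H₁ →L[ℂ] H₁ := ↑u₁⁻¹ with hR₁
  set R₂ : H₂ →L[ℂ] H₂ := ↑u₂⁻¹ with hR₂
  have hu₁val : (u₁ : H₁ →L[ℂ] H₁) = 1 - z₁ • D₁ := rfl
  have hu₂val : (u₂ : H₂ →L[ℂ] H₂) = 1 - z₂ • D₂ := rfl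
  have e₁ : (1 - z₁ • D₁) * R₁ = 1 := by rw [← hu₁val, hR₁]; exact u₁.mul_inv
  have e₁' : R₁ * (1 - z₁ • D₁) = 1 := by rw [← hu₁val, hR₁]; exact u₁.inv_mul
  have e₂ : (1 - z₂ • D₂) * R₂ = 1 := by rw [← hu₂val, hR₂]; exact u₂.mul_inv
  have e₂' : R₂ * (1 - z₂ • D₂) = 1 := by rw [← hu₂val, hR₂]; exact u₂.inv_mul
  set D' : H₂ →L[ℂ] H₁ := B₂.smulRight C₁ with hD'
  set M : (H₁ × H₂) →L[ℂ] H₁ × H₂ := Dop R₁ (z₁ • (R₁ ∘L D' ∘L R₂)) R₂ with hM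
  have hbig : (1 - Eop z₁ z₂ * Dop D₁ D' D₂) * M = 1 := by
    rw [one_sub_E_D, hM, Dop_mul]
    have : (1 - z₁ • D₁) ∘L (z₁ • (R₁ ∘L D' ∘L R₂)) + (-(z₁ • D')) ∘L R₂ = 0 := by
      have : (1 - z₁ • D₁) ∘L (z₁ • (R₁ ∘L D' ∘L R₂))
          = z₁ • (((1 - z₁ • D₁) * R₁) ∘L (D' ∘L R₂)) := by
        simp only [smul_comp, comp_smul]
        rfl
      rw [this, e₁]
      ext x
      simp
    rw [this]
    have h1 : (1 - z₁ • D₁) ∘L R₁ = 1 := e₁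
    have h2 : (1 - z₂ • D₂) ∘L R₂ = 1 := e₂
    rw [h1, h2, Dop_one]
  have hbig' : M * (1 - Eop z₁ z₂ * Dop D₁ D' D₂) = 1 := by
    rw [one_sub_E_D, hM, Dop_mul]
    have : R₁ ∘L (-(z₁ • D')) + (z₁ • (R₁ ∘L D' ∘L R₂)) ∘L (1 - z₂ • D₂) = 0 := by
      have h3 : (z₁ • (R₁ ∘L D' ∘L R₂)) ∘L (1 - z₂ • D₂)
          = z₁ • (R₁ ∘L (D' ∘L (R₂ * (1 - z₂ • D₂)))) := by
        simp only [smul_comp, comp_assoc]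
        rfl
      rw [h3, e₂']
      ext x
      simp
    rw [this]
    have h1 : R₁ ∘L (1 - z₁ • D₁) = 1 := e₁'
    have h2 : R₂ ∘L (1 - z₂ • D₂) = 1 := e₂'
    rw [h1, h2, Dop_one]
  set U : ((H₁ × H₂) →L[ℂ] H₁ × H₂)ˣ :=
    ⟨1 - Eop z₁ z₂ * Dop D₁ D' D₂, M, hbig, hbig'⟩ with hU
  have hinv : (Ring.inverse (1 - Eop z₁ z₂ * Dop D₁ D' D₂) : (H₁ × H₂) →L[ℂ] H₁ × H₂) = M :=
    Ring.inverse_unit U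
  have hinv₁ : (Ring.inverse (1 - z₁ • D₁) : H₁ →L[ℂ] H₁) = R₁ := Ring.inverse_unit u₁
  have hinv₂ : (Ring.inverse (1 - z₂ • D₂) : H₂ →L[ℂ] H₂) = R₂ := Ring.inverse_unit u₂
  rw [transfer2, transfer1, transfer1, hinv, hinv₁, hinv₂]
  rw [Eop_apply]
  simp only [hM, Dop_apply, coprod_apply]
  simp only [smul_apply, comp_apply, smulRight_apply, hD', map_add, map_smul, smul_eq_mul]
  ring
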